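/- Let g ∈ ℝ^d, H symmetric with λ_min(H) < 0, σ > 0, ν ∈ (0,1], and u satisfy ⟨u, H u⟩ ≤ ν λ_min(H)‖u‖² < 0. Let s^E = α u where α minimizes m(α̂ u) = ⟨g, α̂ u⟩ + (α̂²/2)⟨u, H u⟩ + (σ/3)|α̂|³‖u‖³ over α̂ ∈ ℝ. Then σ‖s^E‖ ≥ ν|λ_min(H)|. -/

import Mathlib

open scoped InnerProductSpace

/-- Key 1-D lemma: if `α > 0` minimizes `t ↦ c t + (b/2) t² + (a/3) t³` over `(0,∞)`
with `c ≤ 0` and `a > 0`, then `a α ≥ -b`. -/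
lemma cubic_key (a b c α : ℝ) (ha : 0 < a) (hα : 0 < α) (hc : c ≤ 0)
    (hmin : ∀ t ∈ Set.Ioi (0:ℝ),
      c * α + b / 2 * α ^ 2 + a / 3 * α ^ 3 ≤ c * t + b / 2 * t ^ 2 + a / 3 * t ^ 3) :
    a * α ≥ -b := by
  set ψ : ℝ → ℝ := fun t => c * t + b / 2 * t ^ 2 + a / 3 * t ^ 3 with hψ
  have hloc : IsLocalMin ψ α :=
    Filter.eventually_of_mem (Ioi_mem_nhds hα) (fun t ht => hmin t ht)
  have hd : HasDerivAt ψ (c * 1 + b / 2 * (↑2 * α ^ 1) + a / 3 * (↑3 * α ^ 2)) α := by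
    exact (((hasDerivAt_id α).const_mul c).add
      ((hasDerivAt_pow 2 α).const_mul (b / 2))).add ((hasDerivAt_pow 3 α).const_mul (a / 3))
  have hzero := hloc.hasDerivAt_eq_zero hd
  have : c + b * α + a * α ^ 2 = 0 := by push_cast at hzero; nlinarith [hzero]
  nlinarith [this, hc, hα, mul_pos ha hα]

/-- Lower bound on the step length along an approximate negative curvature direction in
cubic regularization.  Here `lam` plays the role of `λ_min(H)`. -/
theorem cubic_eigen_step_length {d : ℕ}
    (g : EuclideanSpace ℝ (Fin d))
    (H : EuclideanSpace ℝ (Fin d) →L[ℝ] EuclideanSpace ℝ (Fin d))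
    (hH : IsSelfAdjoint H)
    (lam : ℝ)
    (hlow : ∀ v : EuclideanSpace ℝ (Fin d), lam * ‖v‖ ^ 2 ≤ ⟪v, H v⟫_ℝ)
    (hach : ∃ v : EuclideanSpace ℝ (Fin d), v ≠ 0 ∧ ⟪v, H v⟫_ℝ = lam * ‖v‖ ^ 2)
    (hlam : lam < 0)
    (σ ν : ℝ) (hσ : 0 < σ) (hν0 : 0 < ν) (hν1 : ν ≤ 1)
    (u : EuclideanSpace ℝ (Fin d))
    (hu : ⟪u, H u⟫_ℝ ≤ ν * lam * ‖u‖ ^ 2) (hu0 : ν * lam * ‖u‖ ^ 2 < 0)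
    (m : EuclideanSpace ℝ (Fin d) → ℝ)
    (hm : ∀ s, m s = ⟪g, s⟫_ℝ + (1 / 2) * ⟪s, H s⟫_ℝ + σ / 3 * ‖s‖ ^ 3)
    (α : ℝ) (hmin : ∀ β : ℝ, m (α • u) ≤ m (β • u)) :
    σ * ‖α • u‖ ≥ ν * |lam| := by
  set c := ⟪g, u⟫_ℝ with hc
  set b := ⟪u, H u⟫_ℝ with hb
  have hun : 0 < ‖u‖ := by
    rcases eq_or_lt_of_le (norm_nonneg u) with h | h
    · exfalso; rw [← h] at hu0; simp at hu0
    · exact h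
  have hbneg : b < 0 := lt_of_le_of_lt hu hu0
  have ha : 0 < σ * ‖u‖ ^ 3 := by positivity
  -- expansion of m along the line
  have hφ : ∀ β : ℝ, m (β • u) =
      c * β + b / 2 * β ^ 2 + σ * ‖u‖ ^ 3 / 3 * |β| ^ 3 := by
    intro β
    rw [hm]
    have h1 : ⟪g, β • u⟫_ℝ = β * c := real_inner_smul_right g u β
    have h2 : ⟪β • u, H (β • u)⟫_ℝ = β * (β * b) := by
      rw [map_smul, real_inner_smul_left, real_inner_smul_right]
    have h3 : ‖β • u‖ = |β| * ‖u‖ := by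
      rw [norm_smul, Real.norm_eq_abs]
    rw [h1, h2, h3]; ring
  have hmin' : ∀ β : ℝ,
      c * α + b / 2 * α ^ 2 + σ * ‖u‖ ^ 3 / 3 * |α| ^ 3 ≤
      c * β + b / 2 * β ^ 2 + σ * ‖u‖ ^ 3 / 3 * |β| ^ 3 := by
    intro β; rw [← hφ, ← hφ]; exact hmin β
  -- α ≠ 0
  have hα0 : α ≠ 0 := by
    intro h
    subst h
    set ε : ℝ := -3 * b / (4 * (σ * ‖u‖ ^ 3)) with hε
    have hεpos : 0 < ε := by
      apply div_pos (by linarith) (by positivity)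
    have hεval : σ * ‖u‖ ^ 3 / 3 * ε = -b / 4 := by
      field_simp [hε]; rw [hε]; field_simp [ha.ne'] <;> ring
    -- choose the sign of β so that c * β ≤ 0
    set β : ℝ := if 0 ≤ c then -ε else ε with hβ
    have hcβ : c * β ≤ 0 := by
      rcases le_or_gt 0 c with h | h
      · simp only [hβ, if_pos h]; nlinarith
      · simp only [hβ, if_neg (not_le.mpr h)]; nlinarith
    have hβabs : |β| = ε := by
      rcases le_or_gt 0 c with h | h
      · simp [hβ, if_pos h, abs_of_pos hεpos]
      · simp [hβ, if_neg (not_le.mpr h), abs_of_pos hεpos]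
    have h := hmin' β
    rw [hβabs] at h
    simp only [mul_zero, zero_pow, abs_zero] at h
    have hval : c * β + b / 2 * β ^ 2 + σ * ‖u‖ ^ 3 / 3 * ε ^ 3 < 0 := by
      have hβ2 : β ^ 2 = ε ^ 2 := by
        rcases le_or_gt 0 c with hh | hh
        · simp [hβ, if_pos hh]
        · simp [hβ, if_neg (not_le.mpr hh)]
      have : σ * ‖u‖ ^ 3 / 3 * ε ^ 3 = (-b / 4) * ε ^ 2 := by
        rw [pow_succ' ε 2]
        calc σ * ‖u‖ ^ 3 / 3 * (ε * ε ^ 2) = (σ * ‖u‖ ^ 3 / 3 * ε) * ε ^ 2 := by ring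
        _ = (-b / 4) * ε ^ 2 := by rw [hεval]
      rw [this, hβ2]
      nlinarith [hcβ, mul_pos (show (0:ℝ) < -b by linarith) (pow_pos hεpos 2)]
    norm_num at h
    linarith
  -- c * α ≤ 0 : compare with -α
  have hcα : c * α ≤ 0 := by
    have h := hmin' (-α)
    rw [abs_neg] at h
    nlinarith [h]
  -- main bound : σ ‖u‖³ |α| ≥ -b
  have hmain : σ * ‖u‖ ^ 3 * |α| ≥ -b := by
    rcases lt_or_gt_of_ne hα0 with hneg | hpos
    · -- α < 0 : apply key lemma with α̃ = -α, c̃ = -c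
      have hc' : -c ≤ 0 := by nlinarith
      have happ := cubic_key (σ * ‖u‖ ^ 3) b (-c) (-α) ha (by linarith) hc' ?_
      · rwa [abs_of_neg hneg]
      · intro t ht
        have h := hmin' (-t)
        have ht0 : (0:ℝ) < t := ht
        rw [abs_neg, abs_of_pos ht0, abs_of_neg hneg] at h
        nlinarith [h]
    · -- α > 0
      have hc' : c ≤ 0 := by nlinarith
      have happ := cubic_key (σ * ‖u‖ ^ 3) b c α ha hpos hc' ?_
      · rwa [abs_of_pos hpos]
      · intro t ht
        have h := hmin' t
        have ht0 : (0:ℝ) < t := ht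
        rw [abs_of_pos ht0, abs_of_pos hpos] at h
        nlinarith [h]
  -- conclude
  have hb' : -b ≥ ν * |lam| * ‖u‖ ^ 2 := by
    rw [abs_of_neg hlam]; nlinarith [hu]
  have hnorm : ‖α • u‖ = |α| * ‖u‖ := by rw [norm_smul, Real.norm_eq_abs]
  rw [hnorm, ge_iff_le]
  have key : σ * (|α| * ‖u‖) * ‖u‖ ^ 2 ≥ ν * |lam| * ‖u‖ ^ 2 := by
    calc σ * (|α| * ‖u‖) * ‖u‖ ^ 2 = σ * ‖u‖ ^ 3 * |α| := by ring
    _ ≥ -b := hmain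
    _ ≥ ν * |lam| * ‖u‖ ^ 2 := hb'
  have hu2 : 0 < ‖u‖ ^ 2 := by positivity
  exact le_of_mul_le_mul_right (by linarith [key]) hu2
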